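/- Let C = (c_{ij}) be an N×N nonnegative real matrix with zero diagonal, and suppose its infinity-norm r := max_i ∑_j c_{ij} satisfies r < 1. For each i, let B_i be the N×N matrix equal to the identity except that its i-th row is replaced by the i-th row of C. Then the infinity-norm of the product Q := B_N B_{N-1} ⋯ B_1 satisfies ‖Q‖_∞ := max_i ∑_j Q_{ij} ≤ r. -/

import Mathlib

open Matrix

/-- Let `C` be an `N×N` nonnegative matrix with zero diagonal whose maximal
row sum `r` satisfies `r < 1`. With `B i` the identity matrix whose `i`-th row is replaced
by the `i`-th row of `C`, the product `Q = B (N-1) * ⋯ * B 0` has all row sums `≤ r`. -/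
theorem dobrushin_infty_norm_bound (N : ℕ) (C : Matrix (Fin N) (Fin N) ℝ)
    (hC_nonneg : ∀ i j, 0 ≤ C i j) (hC_diag : ∀ i, C i i = 0)
    (r : ℝ) (hr : ∀ i, ∑ j, C i j ≤ r) (hr1 : r < 1)
    (B : Fin N → Matrix (Fin N) (Fin N) ℝ)
    (hB : ∀ i k j, B i k j = if k = i then C i j else (if k = j then 1 else 0))
    (Q : Matrix (Fin N) (Fin N) ℝ)
    (hQ : Q = ((List.finRange N).reverse.map B).prod) :
    ∀ i, ∑ j, Q i j ≤ r := by
  have hBnn : ∀ a k j, 0 ≤ B a k j := by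
    intro a k j; rw [hB]; split_ifs with h1 h2
    · exact hC_nonneg a j
    · exact zero_le_one
    · exact le_rfl
  have hrow : ∀ a k, ∑ j, B a k j ≤ 1 := by
    intro a k
    rcases eq_or_ne k a with h | h
    · subst h
      simp only [hB, if_pos rfl]
      exact le_of_lt (lt_of_le_of_lt (hr k) hr1)
    · simp only [hB, if_neg h]
      simp
  have step : ∀ (a : Fin N) (v : Fin N → ℝ), (∀ k, 0 ≤ v k) →
      (∀ j, 0 ≤ (v ᵥ* B a) j) ∧ (∑ j, (v ᵥ* B a) j ≤ ∑ k, v k) := by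
    intro a v hv
    constructor
    · intro j
      simp only [Matrix.vecMul, dotProduct]
      exact Finset.sum_nonneg fun k _ => mul_nonneg (hv k) (hBnn a k j)
    · simp only [Matrix.vecMul, dotProduct]
      rw [Finset.sum_comm]
      calc ∑ k, ∑ j, v k * B a k j = ∑ k, v k * ∑ j, B a k j := by
            simp [Finset.mul_sum]
        _ ≤ ∑ k, v k * 1 := Finset.sum_le_sum fun k _ =>
            mul_le_mul_of_nonneg_left (hrow a k) (hv k)
        _ = ∑ k, v k := by simp
  have iter : ∀ (l : List (Fin N)) (v : Fin N → ℝ), (∀ k, 0 ≤ v k) →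
      (∀ j, 0 ≤ (v ᵥ* (l.map B).prod) j) ∧ (∑ j, (v ᵥ* (l.map B).prod) j ≤ ∑ k, v k) := by
    intro l
    induction l with
    | nil =>
      intro v hv
      simp only [List.map_nil, List.prod_nil, Matrix.vecMul_one]
      exact ⟨hv, le_rfl⟩
    | cons a l ih =>
      intro v hv
      have h1 := step a v hv
      have h2 := ih (v ᵥ* B a) h1.1
      simp only [List.map_cons, List.prod_cons, ← Matrix.vecMul_vecMul]
      exact ⟨h2.1, le_trans h2.2 h1.2⟩
  have pass : ∀ (l : List (Fin N)) (i : Fin N), i ∉ l →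
      ∀ j, ((l.map B).prod) i j = (1 : Matrix (Fin N) (Fin N) ℝ) i j := by
    intro l
    induction l with
    | nil => intro i _ j; simp
    | cons a l ih =>
      intro i hi j
      have hia : i ≠ a := fun h => hi (h ▸ (List.mem_cons_self : a ∈ a :: l))
      have hil : i ∉ l := fun h => hi (List.mem_cons_of_mem a h)
      simp only [List.map_cons, List.prod_cons, Matrix.mul_apply]
      have hb : ∀ k, B a i k = if i = k then (1:ℝ) else 0 := by
        intro k; rw [hB]; simp [hia]
      calc ∑ k, B a i k * (l.map B).prod k j
          = (l.map B).prod i j := by simp [hb, ite_mul]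
        _ = (1 : Matrix (Fin N) (Fin N) ℝ) i j := ih i hil j
  intro i
  have hiL : i ∈ (List.finRange N).reverse := by simp [List.mem_finRange]
  obtain ⟨l1, l2, hsplit⟩ := List.append_of_mem hiL
  have hnd : ((List.finRange N).reverse).Nodup := List.nodup_reverse.mpr (List.nodup_finRange N)
  rw [hsplit] at hnd
  have hil1 : i ∉ l1 := by
    have := List.disjoint_of_nodup_append hnd
    exact fun h => this h ((List.mem_cons_self : i ∈ i :: l2))
  have hQi : ∀ j, Q i j = (C i ᵥ* (l2.map B).prod) j := by
    intro j
    rw [hQ, hsplit, List.map_append, List.prod_append, Matrix.mul_apply]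
    have : ∀ k, ((l1.map B).prod) i k = if i = k then (1:ℝ) else 0 := by
      intro k; rw [pass l1 i hil1 k, Matrix.one_apply]
    simp only [this, ite_mul, one_mul, zero_mul, Finset.sum_ite_eq, Finset.mem_univ, if_pos]
    rw [List.map_cons, List.prod_cons, Matrix.mul_apply]
    simp only [Matrix.vecMul, dotProduct]
    congr 1
    funext k
    rw [hB]
    simp
  have := (iter l2 (C i) (hC_nonneg i)).2
  calc ∑ j, Q i j = ∑ j, (C i ᵥ* (l2.map B).prod) j := by simp [hQi]
    _ ≤ ∑ k, C i k := this
    _ ≤ r := hr i
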